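/- Straightening an involution commuting with a twisted element (group-theoretic form of Lemma 6.3): Let G be a group, k ≥ 1 an integer, and T₁, …, T_{2k} pairwise commuting elements of G (indices taken modulo 2k in {1, …, 2k}). Let φ, ι ∈ G satisfy: ι² = 1; φ·Tⱼ·φ⁻¹ = T_{j+1} for all j; ι·Tⱼ·ι⁻¹ = T_{j+k}⁻¹ for all j; and ι·φ·ι⁻¹ = φ·∏_{j=1}^{2k} Tⱼ^{nⱼ} for integers n₁, …, n_{2k} with n_{j+k} = nⱼ for all j and n₁ + ⋯ + n_k = 0. Define rⱼ := n₁ + ⋯ + n_{j−1} (so r₁ = 0) and ι' := ι·∏_{j=1}^{2k} Tⱼ^{rⱼ}. Then ι'² = 1 and ι'·φ·ι'⁻¹ = φ. (This is the computation proving Lemma 6.3: the Tⱼ are Dehn twists along the fixed boundary components, φ is the surface homeomorphism, and ι is an orientation-reversing free involution commuting with φ only up to boundary twists; multiplying ι by suitable boundary twists makes it commute on the nose.) -/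

import Mathlib

private lemma list_prod_map_mul {G : Type*} [Monoid G] (l : List ℕ) (u v : ℕ → G)
    (h : ∀ i j, Commute (u i) (v j)) :
    (l.map u).prod * (l.map v).prod = (l.map fun i => u i * v i).prod := by
  induction l with
  | nil => simp
  | cons a t ih =>
    simp only [List.map_cons, List.prod_cons]
    have hc : Commute ((t.map u).prod) (v a) := by
      apply Commute.symm
      apply Commute.list_prod_right
      intro y hy
      obtain ⟨i, hi, rfl⟩ := List.mem_map.1 hy
      exact (h i a).symm
    calc u a * (t.map u).prod * (v a * (t.map v).prod)
        = u a * ((t.map u).prod * v a * (t.map v).prod) := by simp [mul_assoc]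
      _ = u a * (v a * (t.map u).prod * (t.map v).prod) := by rw [hc.eq]
      _ = u a * v a * ((t.map u).prod * (t.map v).prod) := by simp [mul_assoc]
      _ = u a * v a * (t.map fun i => u i * v i).prod := by rw [ih]

private lemma list_prod_map_conj {G : Type*} [Group G] (l : List ℕ) (u : ℕ → G) (c : G) :
    c * (l.map u).prod * c⁻¹ = (l.map fun i => c * u i * c⁻¹).prod := by
  induction l with
  | nil => simp
  | cons a t ih =>
    simp only [List.map_cons, List.prod_cons, ← ih]
    group

private lemma list_prod_shift_one {G : Type*} [Monoid G] (N : ℕ) (u : ℕ → G)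
    (hc : ∀ i j, Commute (u i) (u j)) (hper : u N = u 0) :
    ((List.range N).map fun i => u (i + 1)).prod = ((List.range N).map u).prod := by
  cases N with
  | zero => simp
  | succ m =>
    have hL : ((List.range (m+1)).map fun i => u (i+1)).prod
        = ((List.range m).map fun i => u (i+1)).prod * u (m+1) := by
      rw [List.range_succ]; simp
    have hR : ((List.range (m+1)).map u).prod
        = u 0 * ((List.range m).map fun i => u (i+1)).prod := by
      rw [List.range_succ_eq_map]
      simp [List.map_map, Function.comp_def]
    rw [hL, hR, hper]
    apply Commute.eq
    apply Commute.symm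
    apply Commute.list_prod_right
    intro y hy
    obtain ⟨i, hi, rfl⟩ := List.mem_map.1 hy
    exact hc 0 (i+1)

private lemma list_prod_shift {G : Type*} [Monoid G] (N : ℕ) (u : ℕ → G)
    (hc : ∀ i j, Commute (u i) (u j)) (hper : ∀ i, u (i + N) = u i) (s : ℕ) :
    ((List.range N).map fun i => u (i + s)).prod = ((List.range N).map u).prod := by
  induction s with
  | zero => simp
  | succ s ih =>
    have h1 : (fun i => u (i + (s + 1))) = fun i => (fun j => u (j + s)) (i + 1) := by
      funext i; simp [Nat.add_assoc, Nat.add_comm 1 s]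
    rw [h1, list_prod_shift_one N (fun j => u (j + s)) (fun i j => hc _ _)
      (by show u (N + s) = u (0 + s); rw [Nat.zero_add, Nat.add_comm]; exact hper s)]
    exact ih

private lemma flatMap_eq_map (l : List ℕ) : (l.flatMap fun a => [((a:ℕ):ℤ)]) = l.map (fun a : ℕ => (a:ℤ)) := by
  induction l with
  | nil => rfl
  | cons a t ih => simp [ih]

private def Qprod {G : Type*} [Group G] (k : ℕ) (T : ℤ → G) (f : ℤ → ℤ) : G :=
  ((List.range (2 * k)).map fun i => T ((i : ℤ) + 1) ^ f ((i : ℤ) + 1)).prod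

private lemma Qprod_eq {G : Type*} [Group G] (k : ℕ) (T : ℤ → G) (f : ℤ → ℤ) :
    Qprod k T f = ((List.range (2 * k)).map fun i : ℕ => T ((i : ℤ) + 1) ^ f ((i : ℤ) + 1)).prod := by
  show (List.map _ ((List.range (2*k)).flatMap fun a => [((a:ℕ):ℤ)])).prod = _
  rw [flatMap_eq_map, List.map_map]
  rfl

private lemma Qprod_congr {G : Type*} [Group G] (k : ℕ) (T : ℤ → G) (f g : ℤ → ℤ)
    (h : ∀ j : ℤ, 1 ≤ j → j ≤ 2 * (k : ℤ) → f j = g j) : Qprod k T f = Qprod k T g := by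
  rw [Qprod_eq, Qprod_eq]
  congr 1
  apply List.map_congr_left
  intro i hi
  rw [List.mem_range] at hi
  rw [h _ (by omega) (by omega)]

private lemma Qprod_mul {G : Type*} [Group G] (k : ℕ) (T : ℤ → G)
    (hTcomm : ∀ i j : ℤ, Commute (T i) (T j)) (f g : ℤ → ℤ) :
    Qprod k T f * Qprod k T g = Qprod k T (fun j => f j + g j) := by
  rw [Qprod_eq, Qprod_eq, Qprod_eq]
  rw [list_prod_map_mul _ _ _ fun i j => (hTcomm _ _).zpow_zpow _ _]
  simp only [← zpow_add]

private lemma Qprod_zero {G : Type*} [Group G] (k : ℕ) (T : ℤ → G) :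
    Qprod k T (fun _ => 0) = 1 := by
  rw [Qprod_eq]
  simp

private lemma Qprod_inv {G : Type*} [Group G] (k : ℕ) (T : ℤ → G)
    (hTcomm : ∀ i j : ℤ, Commute (T i) (T j)) (f : ℤ → ℤ) :
    (Qprod k T f)⁻¹ = Qprod k T (fun j => -(f j)) := by
  apply inv_eq_of_mul_eq_one_right
  rw [Qprod_mul k T hTcomm]
  simp only [add_neg_cancel]
  exact Qprod_zero k T

private lemma Qprod_conj_phi {G : Type*} [Group G] (k : ℕ) (T : ℤ → G)
    (hTper : ∀ j : ℤ, T (j + 2 * (k : ℤ)) = T j)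
    (hTcomm : ∀ i j : ℤ, Commute (T i) (T j)) (φ : G)
    (hφT : ∀ j : ℤ, φ * T j * φ⁻¹ = T (j + 1)) (f : ℤ → ℤ)
    (hf : f (2 * (k : ℤ) + 1) = f 1) :
    φ⁻¹ * Qprod k T f * φ = Qprod k T (fun j => f (j + 1)) := by
  have hinv : ∀ j : ℤ, φ⁻¹ * T j * φ = T (j - 1) := by
    intro j
    have h := hφT (j - 1)
    rw [show j - 1 + 1 = j by ring] at h
    rw [← h]; group
  set w : ℕ → G := fun i => T ((i : ℤ)) ^ f ((i : ℤ) + 1) with hw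
  have h1 : φ⁻¹ * Qprod k T f * φ = ((List.range (2*k)).map w).prod := by
    rw [Qprod_eq]
    calc φ⁻¹ * ((List.range (2*k)).map (fun i : ℕ => T ((i:ℤ)+1) ^ f ((i:ℤ)+1))).prod * φ
        = φ⁻¹ * ((List.range (2*k)).map (fun i : ℕ => T ((i:ℤ)+1) ^ f ((i:ℤ)+1))).prod * (φ⁻¹)⁻¹ := by
          rw [inv_inv]
      _ = ((List.range (2*k)).map fun i : ℕ => φ⁻¹ * (T ((i:ℤ)+1) ^ f ((i:ℤ)+1)) * (φ⁻¹)⁻¹).prod :=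
          list_prod_map_conj _ _ _
      _ = ((List.range (2*k)).map w).prod := by
          apply congrArg
          apply List.map_congr_left; intro i _
          rw [← conj_zpow, inv_inv, hinv, show ((i:ℤ)+1-1) = (i:ℤ) by ring]
  have hwend : w (2*k) = w 0 := by
    simp only [hw]
    push_cast
    rw [hf, show (2*(k:ℤ)) = 0 + 2*(k:ℤ) by ring, hTper]
  have h2 : (fun i : ℕ => T ((i:ℤ)+1) ^ (fun j : ℤ => f (j+1)) ((i:ℤ)+1)) = fun i : ℕ => w (i+1) := by
    funext i
    simp only [hw]
    push_cast
    ring_nf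
  rw [h1, Qprod_eq, h2]
  exact (list_prod_shift_one (2*k) w (fun i j => (hTcomm _ _).zpow_zpow _ _) hwend).symm

private lemma Qprod_conj_iota {G : Type*} [Group G] (k : ℕ) (T : ℤ → G)
    (hTper : ∀ j : ℤ, T (j + 2 * (k : ℤ)) = T j)
    (hTcomm : ∀ i j : ℤ, Commute (T i) (T j)) (ι : G)
    (hιT : ∀ j : ℤ, ι * T j * ι⁻¹ = (T (j + (k : ℤ)))⁻¹) (f : ℤ → ℤ)
    (hfper : ∀ j : ℤ, f (j + 2 * (k : ℤ)) = f j) :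
    ι * Qprod k T f * ι⁻¹ = Qprod k T (fun j => -(f (j - (k : ℤ)))) := by
  set u : ℕ → G := fun i => T ((i:ℤ)+1) ^ (-(f ((i:ℤ)+1 - (k:ℤ)))) with hu
  have huk : (fun i : ℕ => ι * (T ((i:ℤ)+1) ^ f ((i:ℤ)+1)) * ι⁻¹) = fun i : ℕ => u (i + k) := by
    funext i
    rw [← conj_zpow, hιT, inv_zpow, ← zpow_neg]
    simp only [hu]
    push_cast
    ring_nf
  have huper : ∀ i : ℕ, u (i + 2*k) = u i := by
    intro i
    simp only [hu]
    push_cast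
    rw [show ((i:ℤ) + 2*(k:ℤ) + 1) = ((i:ℤ)+1) + 2*(k:ℤ) by ring, hTper,
      show ((i:ℤ)+1) + 2*(k:ℤ) - (k:ℤ) = ((i:ℤ)+1-(k:ℤ)) + 2*(k:ℤ) by ring, hfper]
  have h1 : ι * Qprod k T f * ι⁻¹ = ((List.range (2*k)).map fun i => u (i + k)).prod := by
    rw [Qprod_eq, list_prod_map_conj, huk]
  rw [h1, list_prod_shift (2*k) u (fun i j => (hTcomm _ _).zpow_zpow _ _) huper k, Qprod_eq]

private noncomputable def rho (n : ℤ → ℤ) (j : ℤ) : ℤ :=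
  (∑ i ∈ Finset.Ico (1:ℤ) j, n i) - ∑ i ∈ Finset.Ico j (1:ℤ), n i

private lemma rho_eq_of_one_le (n : ℤ → ℤ) (j : ℤ) (h : 1 ≤ j) :
    rho n j = ∑ i ∈ Finset.Ico (1:ℤ) j, n i := by
  unfold rho
  rw [Finset.Ico_eq_empty (show ¬ j < (1:ℤ) by omega), Finset.sum_empty, sub_zero]

private lemma rho_step (n : ℤ → ℤ) (j : ℤ) : rho n (j + 1) = rho n j + n j := by
  unfold rho
  rcases le_or_gt 1 j with h | h
  · rw [Finset.Ico_eq_empty (show ¬ j < (1:ℤ) by omega),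
      Finset.Ico_eq_empty (show ¬ j + 1 < (1:ℤ) by omega),
      ← Finset.Ico_union_Ico_eq_Ico h (show j ≤ j + 1 by omega),
      Finset.sum_union (Finset.Ico_disjoint_Ico_consecutive (1:ℤ) j (j+1)),
      show Finset.Ico j (j+1) = {j} from by ext x; simp [Finset.mem_Ico]; omega,
      Finset.sum_singleton, Finset.sum_empty]
    ring
  · rw [Finset.Ico_eq_empty (show ¬ (1:ℤ) < j + 1 by omega),
      Finset.Ico_eq_empty (show ¬ (1:ℤ) < j by omega),
      ← Finset.Ico_union_Ico_eq_Ico (show j ≤ j + 1 by omega) (show j + 1 ≤ (1:ℤ) by omega),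
      Finset.sum_union (Finset.Ico_disjoint_Ico_consecutive j (j+1) 1),
      show Finset.Ico j (j+1) = {j} from by ext x; simp [Finset.mem_Ico]; omega,
      Finset.sum_singleton, Finset.sum_empty]
    ring

private lemma rho_steps (n : ℤ → ℤ) (m : ℕ) (j : ℤ) :
    rho n (j + (m : ℤ)) = rho n j + ∑ i ∈ Finset.range m, n (j + i) := by
  induction m with
  | zero => simp
  | succ m ih =>
    rw [show j + ((m:ℕ)+1 : ℕ) = (j + (m:ℤ)) + 1 by push_cast; ring, rho_step, ih,
      Finset.sum_range_succ]
    ring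

private lemma window_step (k : ℕ) (n : ℤ → ℤ) (hnk : ∀ j : ℤ, n (j + (k:ℤ)) = n j) (m : ℤ) :
    ∑ i ∈ Finset.range k, n (m + 1 + i) = ∑ i ∈ Finset.range k, n (m + i) := by
  have h1 : ∑ i ∈ Finset.range (k+1), n (m + i) = (∑ i ∈ Finset.range k, n (m + i)) + n (m + (k:ℤ)) :=
    Finset.sum_range_succ (fun i : ℕ => n (m + i)) k
  have h2 : ∑ i ∈ Finset.range (k+1), n (m + i) = (∑ i ∈ Finset.range k, n (m + ((i:ℕ)+1:ℕ))) + n (m + ((0:ℕ):ℤ)) :=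
    Finset.sum_range_succ' (fun i : ℕ => n (m + i)) k
  have h3 : ∑ i ∈ Finset.range k, n (m + ((i:ℕ)+1:ℕ)) = ∑ i ∈ Finset.range k, n (m + 1 + i) := by
    apply Finset.sum_congr rfl
    intro i _
    apply congrArg
    push_cast
    ring
  have h4 : n (m + ((0:ℕ):ℤ)) = n m := by norm_num
  have h5 : n (m + (k:ℤ)) = n m := hnk m
  rw [h3, h4] at h2
  omega

private lemma sum_range_eq_Icc (n : ℤ → ℤ) (m : ℕ) :
    ∑ i ∈ Finset.range m, n (1 + (i:ℤ)) = ∑ j ∈ Finset.Icc (1:ℤ) (m:ℤ), n j := by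
  induction m with
  | zero => simp [Finset.Icc_eq_empty (show ¬ (1:ℤ) ≤ 0 by omega)]
  | succ m ih =>
    rw [Finset.sum_range_succ, ih,
      show Finset.Icc (1:ℤ) ((m:ℕ)+1:ℕ) = insert ((m:ℤ)+1) (Finset.Icc (1:ℤ) (m:ℤ)) from by
        ext x; simp; push_cast; omega,
      Finset.sum_insert (by simp)]
    push_cast
    ring

private lemma window_zero (k : ℕ) (n : ℤ → ℤ) (hnk : ∀ j : ℤ, n (j + (k:ℤ)) = n j)
    (hnsum : ∑ j ∈ Finset.Icc (1:ℤ) (k:ℤ), n j = 0) (j : ℤ) :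
    ∑ i ∈ Finset.range k, n (j + i) = 0 := by
  have hbase : ∑ i ∈ Finset.range k, n (1 + (i:ℤ)) = 0 := by
    rw [sum_range_eq_Icc, hnsum]
  have key : ∀ j : ℤ, ∑ i ∈ Finset.range k, n (j + i) = ∑ i ∈ Finset.range k, n (1 + (i:ℤ)) := by
    intro j
    induction j using Int.induction_on with
    | zero =>
      rw [← window_step k n hnk 0]
      apply Finset.sum_congr rfl
      intro i _
      rw [show (0:ℤ) + 1 + i = 1 + (i:ℤ) by ring]
    | succ i ih => rw [window_step k n hnk (i:ℤ), ih]
    | pred i ih =>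
      have h := window_step k n hnk (-(i:ℤ) - 1)
      have h2 : ∑ i' ∈ Finset.range k, n (-(i:ℤ) - 1 + 1 + i') = ∑ i' ∈ Finset.range k, n (-(i:ℤ) + i') := by
        apply Finset.sum_congr rfl
        intro i' _
        rw [show -(i:ℤ) - 1 + 1 + i' = -(i:ℤ) + i' by ring]
      rw [← h, h2, ih]
  rw [key j, hbase]


/-- Straightening an involution commuting with a twisted element (group-theoretic
form of Lemma 6.3): let `T₁, …, T_{2k}` be pairwise commuting elements of a group
`G`, indexed by integers taken modulo `2k` (i.e. `T` is `2k`-periodic). Suppose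
`ι² = 1`, `φ·Tⱼ·φ⁻¹ = T_{j+1}`, `ι·Tⱼ·ι⁻¹ = T_{j+k}⁻¹`, and
`ι·φ·ι⁻¹ = φ·∏_{j=1}^{2k} Tⱼ^{nⱼ}` for `2k`-periodic integers `nⱼ` with
`n_{j+k} = nⱼ` and `n₁ + ⋯ + n_k = 0`. Set `rⱼ := n₁ + ⋯ + n_{j−1}` and
`ι' := ι·∏_{j=1}^{2k} Tⱼ^{rⱼ}`. Then `ι'² = 1` and `ι'·φ·ι'⁻¹ = φ`.
(Products over `j = 1, …, 2k` are written as ordered list products; since the `Tⱼ`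
pairwise commute, the order is immaterial.) -/
theorem straighten_involution
    {G : Type*} [Group G] (k : ℕ) (hk : 1 ≤ k)
    (T : ℤ → G) (hTper : ∀ j : ℤ, T (j + 2 * (k : ℤ)) = T j)
    (hTcomm : ∀ i j : ℤ, Commute (T i) (T j))
    (φ ι : G) (hι : ι ^ 2 = 1)
    (hφT : ∀ j : ℤ, φ * T j * φ⁻¹ = T (j + 1))
    (hιT : ∀ j : ℤ, ι * T j * ι⁻¹ = (T (j + (k : ℤ)))⁻¹)
    (n : ℤ → ℤ) (hnper : ∀ j : ℤ, n (j + 2 * (k : ℤ)) = n j)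
    (hnk : ∀ j : ℤ, n (j + (k : ℤ)) = n j)
    (hnsum : ∑ j ∈ Finset.Icc (1 : ℤ) (k : ℤ), n j = 0)
    (hconj : ι * φ * ι⁻¹ =
      φ * ((List.range (2 * k)).map fun i => T ((i : ℤ) + 1) ^ n ((i : ℤ) + 1)).prod)
    (r : ℤ → ℤ) (hr : ∀ j : ℤ, r j = ∑ i ∈ Finset.Ico (1 : ℤ) j, n i)
    (ι' : G) (hι' : ι' =
      ι * ((List.range (2 * k)).map fun i => T ((i : ℤ) + 1) ^ r ((i : ℤ) + 1)).prod) :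
    ι' ^ 2 = 1 ∧ ι' * φ * ι'⁻¹ = φ := by
  have hQconj : ι * φ * ι⁻¹ = φ * Qprod k T n := hconj
  have hQι' : ι' = ι * Qprod k T r := hι'
  have hrho_r : Qprod k T r = Qprod k T (rho n) :=
    Qprod_congr k T r (rho n) (fun j h1 _ => by rw [hr j, rho_eq_of_one_le n j h1])
  have hwin := window_zero k n hnk hnsum
  have hshiftk : ∀ j : ℤ, rho n (j + (k:ℤ)) = rho n j := fun j => by
    rw [rho_steps n k j, hwin j, add_zero]
  have hshift2k : ∀ j : ℤ, rho n (j + 2*(k:ℤ)) = rho n j := fun j => by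
    rw [show j + 2*(k:ℤ) = (j + (k:ℤ)) + (k:ℤ) by ring, hshiftk, hshiftk]
  have hρper1 : rho n (2*(k:ℤ) + 1) = rho n 1 := by
    rw [show 2*(k:ℤ)+1 = 1 + 2*(k:ℤ) by ring, hshift2k]
  have hQconjρφ := Qprod_conj_phi k T hTper hTcomm φ hφT (rho n) hρper1
  have e1 : Qprod k T (fun j => rho n (j+1)) * (Qprod k T (rho n))⁻¹ = Qprod k T n := by
    rw [Qprod_inv k T hTcomm, Qprod_mul k T hTcomm]
    apply Qprod_congr
    intro j _ _
    show rho n (j+1) + -(rho n j) = n j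
    have := rho_step n j
    omega
  have key1 : Qprod k T (rho n) * φ * (Qprod k T (rho n))⁻¹ = φ * Qprod k T n := by
    calc Qprod k T (rho n) * φ * (Qprod k T (rho n))⁻¹
        = φ * ((φ⁻¹ * Qprod k T (rho n) * φ) * (Qprod k T (rho n))⁻¹) := by group
      _ = φ * Qprod k T n := by rw [hQconjρφ, e1]
  have hιQn : ι * Qprod k T n * ι⁻¹ = (Qprod k T n)⁻¹ := by
    rw [Qprod_conj_iota k T hTper hTcomm ι hιT n hnper, Qprod_inv k T hTcomm]
    apply Qprod_congr
    intro j _ _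
    show -(n (j - (k:ℤ))) = -(n j)
    have h := hnk (j - (k:ℤ))
    rw [show j - (k:ℤ) + (k:ℤ) = j by ring] at h
    rw [h]
  have goal2 : ι' * φ * ι'⁻¹ = φ := by
    rw [hQι', hrho_r]
    calc ι * Qprod k T (rho n) * φ * (ι * Qprod k T (rho n))⁻¹
        = ι * (Qprod k T (rho n) * φ * (Qprod k T (rho n))⁻¹) * ι⁻¹ := by group
      _ = ι * (φ * Qprod k T n) * ι⁻¹ := by rw [key1]
      _ = (ι * φ * ι⁻¹) * (ι * Qprod k T n * ι⁻¹) := by group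
      _ = (φ * Qprod k T n) * (Qprod k T n)⁻¹ := by rw [hQconj, hιQn]
      _ = φ := by group
  have hinvι : ι⁻¹ = ι := by
    have h := hι
    rw [sq] at h
    exact inv_eq_of_mul_eq_one_right h
  have hιQρ : ι * Qprod k T (rho n) * ι⁻¹ = (Qprod k T (rho n))⁻¹ := by
    rw [Qprod_conj_iota k T hTper hTcomm ι hιT (rho n) hshift2k, Qprod_inv k T hTcomm]
    apply Qprod_congr
    intro j _ _
    show -(rho n (j - (k:ℤ))) = -(rho n j)
    have h := hshiftk (j - (k:ℤ))
    rw [show j - (k:ℤ) + (k:ℤ) = j by ring] at h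
    rw [h]
  have goal1 : ι' ^ 2 = 1 := by
    rw [hQι', hrho_r, sq]
    calc ι * Qprod k T (rho n) * (ι * Qprod k T (rho n))
        = (ι * Qprod k T (rho n) * ι⁻¹) * Qprod k T (rho n) := by rw [hinvι]; group
      _ = 1 := by rw [hιQρ]; group
  exact ⟨goal1, goal2⟩
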